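/- For every integer d ≥ 2, ∫_0^∞ f_d(t) dt = 2·∫_0^1 f_d(t) dt = 2·∫_1^∞ f_d(t) dt. -/

import Mathlib

open Finset MeasureTheory

/-- `M d t = ∑_{k=0}^{d-1} C(d-1,k)² t^{2k}`. -/
noncomputable def M (d : ℕ) (t : ℝ) : ℝ :=
  ∑ k ∈ Finset.range d, ((d - 1).choose k : ℝ) ^ 2 * t ^ (2 * k)

/-- `A d t = ∑_{k=1}^{d-1} k² C(d-1,k)² t^{2(k-1)}`. -/
noncomputable def A (d : ℕ) (t : ℝ) : ℝ :=
  ∑ k ∈ Finset.Icc 1 (d - 1), (k : ℝ) ^ 2 * ((d - 1).choose k : ℝ) ^ 2 * t ^ (2 * (k - 1))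

/-- `B d t = ∑_{k=1}^{d-1} k C(d-1,k)² t^{2k-1}`. -/
noncomputable def B (d : ℕ) (t : ℝ) : ℝ :=
  ∑ k ∈ Finset.Icc 1 (d - 1), (k : ℝ) * ((d - 1).choose k : ℝ) ^ 2 * t ^ (2 * k - 1)

/-- The density `f d t = (1/π)·√(A_d(t)·M_d(t) − B_d(t)²) / M_d(t)`. -/
noncomputable def f (d : ℕ) (t : ℝ) : ℝ :=
  (1 / Real.pi) * Real.sqrt (A d t * M d t - (B d t) ^ 2) / M d t

/-- The coefficients `a_k`. -/
noncomputable def a (d k : ℕ) : ℝ :=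
  (∑ i ∈ Finset.range d, ∑ j ∈ Finset.range (d - 1),
      if i + j = k then ((d - 1).choose i : ℝ) ^ 2 * ((d - 2).choose j : ℝ) ^ 2 else 0)
  - (∑ i ∈ Finset.range (d - 1), ∑ j ∈ Finset.range (d - 1),
      if i + j + 1 = k then
        ((d - 2).choose i : ℝ) * ((d - 1).choose (i + 1) : ℝ) *
          ((d - 2).choose j : ℝ) * ((d - 1).choose (j + 1) : ℝ)
      else 0)



-- helper: range (m+1) = insert 0 (Icc 1 m)
lemma range_eq_insert_Icc (m : ℕ) : Finset.range (m + 1) = insert 0 (Finset.Icc 1 m) := by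
  ext x; simp [Nat.lt_succ_iff]; omega

lemma pow_inv_mul {t : ℝ} (ht : t ≠ 0) {a b : ℕ} (h : a ≤ b) :
    t⁻¹ ^ a * t ^ b = t ^ (b - a) := by
  have : t ^ b = t ^ (b - a) * t ^ a := by rw [← pow_add]; congr 1; omega
  rw [this, inv_pow, mul_comm, mul_assoc, mul_inv_cancel₀ (pow_ne_zero a ht), mul_one]

lemma sum_reflect_inv (n : ℕ) (g : ℕ → ℝ) {t : ℝ} (ht : t ≠ 0) :
    (∑ k ∈ Finset.range (n + 1), g k * t⁻¹ ^ (2 * k)) * t ^ (2 * n)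
      = ∑ k ∈ Finset.range (n + 1), g (n - k) * t ^ (2 * k) := by
  rw [Finset.sum_mul, ← Finset.sum_range_reflect (fun k => g (n - k) * t ^ (2 * k)) (n + 1)]
  apply Finset.sum_congr rfl
  intro j hj
  have hj' : j ≤ n := by simpa [Nat.lt_succ_iff] using hj
  have h1 : n + 1 - 1 - j = n - j := by omega
  have h2 : n - (n - j) = j := by omega
  rw [h1, h2, mul_assoc, pow_inv_mul ht (by omega : 2 * j ≤ 2 * n),
    (by omega : 2 * n - 2 * j = 2 * (n - j))]

lemma M_eq (d : ℕ) (hd : 2 ≤ d) (t : ℝ) :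
    M d t = ∑ k ∈ Finset.range (d - 1 + 1), ((d - 1).choose k : ℝ) ^ 2 * t ^ (2 * k) := by
  rw [M, (by omega : d - 1 + 1 = d)]

lemma A_eq (d : ℕ) (hd : 2 ≤ d) (t : ℝ) :
    t ^ 2 * A d t
      = ∑ k ∈ Finset.range (d - 1 + 1), (k : ℝ) ^ 2 * ((d - 1).choose k : ℝ) ^ 2 * t ^ (2 * k) := by
  rw [A, range_eq_insert_Icc, Finset.sum_insert (by simp), Finset.mul_sum]
  simp only [Nat.cast_zero, ne_eq, OfNat.ofNat_ne_zero, not_false_eq_true, zero_pow, zero_mul,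
    zero_add]
  apply Finset.sum_congr rfl
  intro k hk
  have hk1 : 1 ≤ k := (Finset.mem_Icc.mp hk).1
  calc t ^ 2 * ((k : ℝ) ^ 2 * ((d - 1).choose k : ℝ) ^ 2 * t ^ (2 * (k - 1)))
      = (k : ℝ) ^ 2 * ((d - 1).choose k : ℝ) ^ 2 * (t ^ (2 * (k - 1)) * t ^ 2) := by ring
    _ = _ := by rw [← pow_add, (by omega : 2 * (k - 1) + 2 = 2 * k)]

lemma B_eq (d : ℕ) (hd : 2 ≤ d) (t : ℝ) :
    t * B d t
      = ∑ k ∈ Finset.range (d - 1 + 1), (k : ℝ) * ((d - 1).choose k : ℝ) ^ 2 * t ^ (2 * k) := by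
  rw [B, range_eq_insert_Icc, Finset.sum_insert (by simp), Finset.mul_sum]
  simp only [Nat.cast_zero, zero_mul, zero_add]
  apply Finset.sum_congr rfl
  intro k hk
  have hk1 : 1 ≤ k := (Finset.mem_Icc.mp hk).1
  calc t * ((k : ℝ) * ((d - 1).choose k : ℝ) ^ 2 * t ^ (2 * k - 1))
      = (k : ℝ) * ((d - 1).choose k : ℝ) ^ 2 * (t ^ (2 * k - 1) * t ^ 1) := by ring
    _ = _ := by rw [← pow_add, (by omega : 2 * k - 1 + 1 = 2 * k)]

lemma I1 (d : ℕ) (hd : 2 ≤ d) {t : ℝ} (ht : t ≠ 0) :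
    M d t⁻¹ * t ^ (2 * (d - 1)) = M d t := by
  rw [M_eq d hd, M_eq d hd, sum_reflect_inv (d - 1) (fun k => ((d - 1).choose k : ℝ) ^ 2) ht]
  apply Finset.sum_congr rfl
  intro k hk
  have hk' : k ≤ d - 1 := by simpa [Nat.lt_succ_iff] using hk
  rw [Nat.choose_symm hk']

lemma I2 (d : ℕ) (hd : 2 ≤ d) {t : ℝ} (ht : t ≠ 0) :
    (t⁻¹ * B d t⁻¹) * t ^ (2 * (d - 1)) = ((d - 1 : ℕ) : ℝ) * M d t - t * B d t := by
  rw [B_eq d hd, sum_reflect_inv (d - 1)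
    (fun k => (k : ℝ) * ((d - 1).choose k : ℝ) ^ 2) ht]
  rw [M_eq d hd, B_eq d hd, Finset.mul_sum, ← Finset.sum_sub_distrib]
  apply Finset.sum_congr rfl
  intro k hk
  have hk' : k ≤ d - 1 := by simpa [Nat.lt_succ_iff] using hk
  rw [Nat.choose_symm hk', Nat.cast_sub hk']
  ring

lemma I3 (d : ℕ) (hd : 2 ≤ d) {t : ℝ} (ht : t ≠ 0) :
    (t⁻¹ ^ 2 * A d t⁻¹) * t ^ (2 * (d - 1))
      = ((d - 1 : ℕ) : ℝ) ^ 2 * M d t - 2 * ((d - 1 : ℕ) : ℝ) * (t * B d t) + t ^ 2 * A d t := by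
  rw [A_eq d hd, sum_reflect_inv (d - 1)
    (fun k => (k : ℝ) ^ 2 * ((d - 1).choose k : ℝ) ^ 2) ht]
  rw [M_eq d hd, B_eq d hd, A_eq d hd, Finset.mul_sum, Finset.mul_sum, ← Finset.sum_sub_distrib,
    ← Finset.sum_add_distrib]
  apply Finset.sum_congr rfl
  intro k hk
  have hk' : k ≤ d - 1 := by simpa [Nat.lt_succ_iff] using hk
  rw [Nat.choose_symm hk', Nat.cast_sub hk']
  ring



lemma M_pos (d : ℕ) (hd : 2 ≤ d) (t : ℝ) : 0 < M d t := by
  have h0 : (0:ℕ) ∈ Finset.range d := Finset.mem_range.2 (by omega)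
  have := Finset.single_le_sum
    (f := fun k => ((d - 1).choose k : ℝ) ^ 2 * t ^ (2 * k))
    (fun i _ => by simp only [pow_mul]; positivity) h0
  simp only [Nat.choose_zero_right, Nat.cast_one, one_pow, mul_zero, pow_zero, mul_one] at this
  rw [M]; linarith

lemma f_inv (d : ℕ) (hd : 2 ≤ d) {t : ℝ} (ht : 0 < t) : f d t⁻¹ = t ^ 2 * f d t := by
  have ht' : t ≠ 0 := ne_of_gt ht
  set m := d - 1 with hm
  have hP : (0:ℝ) < t ^ (2 * m) := pow_pos ht _
  have hM := M_pos d hd t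
  have e1 : M d t⁻¹ = M d t / t ^ (2 * m) := by
    rw [eq_div_iff hP.ne']; exact I1 d hd ht'
  have e2 : B d t⁻¹ = t * (((m : ℕ) : ℝ) * M d t - t * B d t) / t ^ (2 * m) := by
    rw [eq_div_iff hP.ne', ← I2 d hd ht']
    field_simp
    rfl
  have e3 : A d t⁻¹ = t ^ 2 * (((m : ℕ) : ℝ) ^ 2 * M d t - 2 * ((m : ℕ) : ℝ) * (t * B d t)
      + t ^ 2 * A d t) / t ^ (2 * m) := by
    rw [eq_div_iff hP.ne', ← I3 d hd ht']
    field_simp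
    rfl
  have eN : A d t⁻¹ * M d t⁻¹ - B d t⁻¹ ^ 2
      = (t ^ 2 / t ^ (2 * m)) ^ 2 * (A d t * M d t - B d t ^ 2) := by
    rw [e1, e2, e3]
    field_simp
    ring
  have hr : (0:ℝ) < t ^ 2 / t ^ (2 * m) := by positivity
  rw [f, f, eN, e1, mul_comm ((t ^ 2 / t ^ (2 * m)) ^ 2),
    Real.sqrt_mul' _ (sq_nonneg _), Real.sqrt_sq hr.le]
  field_simp

lemma f_cont (d : ℕ) (hd : 2 ≤ d) : Continuous (f d) := by
  have hM : Continuous (M d) := continuous_finset_sum _ fun k _ => by continuity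
  have hA : Continuous (A d) := continuous_finset_sum _ fun k _ => by continuity
  have hB : Continuous (B d) := continuous_finset_sum _ fun k _ => by continuity
  apply Continuous.div
  · exact (continuous_const.mul ((hA.mul hM).sub (hB.pow 2)).sqrt)
  · exact hM
  · exact fun t => (M_pos d hd t).ne'


theorem stmt_8 (d : ℕ) (hd : 2 ≤ d) :
    (∫ t in Set.Ioi (0 : ℝ), f d t) = 2 * ∫ t in (0 : ℝ)..(1 : ℝ), f d t ∧
    (∫ t in Set.Ioi (0 : ℝ), f d t) = 2 * ∫ t in Set.Ioi (1 : ℝ), f d t := by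
  have himg : (fun x : ℝ => x⁻¹) '' Set.Ioi 1 = Set.Ioo 0 1 := by
    ext y
    simp only [Set.mem_image, Set.mem_Ioi, Set.mem_Ioo]
    constructor
    · rintro ⟨x, hx, rfl⟩
      have hx0 : (0:ℝ) < x := lt_trans one_pos hx
      exact ⟨inv_pos.2 hx0, by rw [inv_lt_one_iff₀]; right; exact hx⟩
    · intro hy
      exact ⟨y⁻¹, (one_lt_inv₀ hy.1).2 hy.2, inv_inv y⟩
  have hderiv : ∀ x ∈ Set.Ioi (1:ℝ), HasDerivWithinAt (fun x : ℝ => x⁻¹)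
      (-(x ^ 2)⁻¹) (Set.Ioi 1) x := fun x hx =>
    (hasDerivAt_inv (ne_of_gt (lt_trans one_pos hx))).hasDerivWithinAt
  have hinj : Set.InjOn (fun x : ℝ => x⁻¹) (Set.Ioi 1) := fun a _ b _ h => inv_injective h
  have heq : Set.EqOn (fun x => |(-(x ^ 2)⁻¹)| • f d ((fun x : ℝ => x⁻¹) x)) (f d)
      (Set.Ioi 1) := by
    intro x hx
    have hx0 : (0:ℝ) < x := lt_trans one_pos hx
    simp only
    rw [f_inv d hd hx0, abs_neg, abs_inv, abs_of_pos (by positivity : (0:ℝ) < x ^ 2),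
      smul_eq_mul]
    field_simp
  have key : ∫ x in Set.Ioo (0:ℝ) 1, f d x = ∫ x in Set.Ioi (1:ℝ), f d x := by
    rw [← himg, integral_image_eq_integral_abs_deriv_smul measurableSet_Ioi hderiv hinj]
    exact setIntegral_congr_fun measurableSet_Ioi heq
  have hint01 : IntegrableOn (f d) (Set.Ioc (0:ℝ) 1) :=
    ((f_cont d hd).integrableOn_Icc).mono_set Set.Ioc_subset_Icc_self
  have hint1i : IntegrableOn (f d) (Set.Ioi (1:ℝ)) := by
    have h := (integrableOn_image_iff_integrableOn_abs_deriv_smul measurableSet_Ioi hderiv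
      hinj (f d))
    rw [himg] at h
    exact (h.1 (hint01.mono_set Set.Ioo_subset_Ioc_self)).congr_fun heq measurableSet_Ioi
  have total : (∫ t in Set.Ioi (0:ℝ), f d t)
      = (∫ x in Set.Ioc (0:ℝ) 1, f d x) + ∫ x in Set.Ioi (1:ℝ), f d x := by
    rw [← setIntegral_union (Set.Ioc_disjoint_Ioi le_rfl) measurableSet_Ioi hint01 hint1i,
      Set.Ioc_union_Ioi_eq_Ioi zero_le_one]
  have hIoc : ∫ x in Set.Ioc (0:ℝ) 1, f d x = ∫ x in Set.Ioi (1:ℝ), f d x := by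
    rw [integral_Ioc_eq_integral_Ioo]; exact key
  have hiv : ∫ t in (0:ℝ)..1, f d t = ∫ x in Set.Ioc (0:ℝ) 1, f d x :=
    intervalIntegral.integral_of_le zero_le_one
  constructor
  · rw [total, hiv, hIoc]; ring
  · rw [total, hIoc]; ring
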